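/- Let m be an even positive integer, let e_j be a positive divisor of m−1 with f_j = (m−1)/e_j, let γ_j ∈ F_{2^{e_j}}, and let Q_j(x) = Tr^{m−1}_1( Σ_{i=1}^{(f_j−1)/2} x^{2^{i e_j}+1} ). Then for all a, x, z ∈ F_{2^{m−1}}: Q_j(γ_j a (x+z)) + Q_j(γ_j a x) + Q_j(γ_j a z) = Tr^{m−1}_1( a γ_j² ( a x + Tr^{m−1}_{e_j}(a x) ) z ), where Tr^{m−1}_{e_j} is the relative trace from F_{2^{m−1}} to F_{2^{e_j}}. -/

import Mathlib

open Finset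

noncomputable section

abbrev Fq (n : ℕ) := GaloisField 2 n

noncomputable instance (n : ℕ) : Fintype (Fq n) := Fintype.ofFinite _

/-- Absolute trace from `F_{2^n}` to `F_2`. -/
noncomputable def tr1 (n : ℕ) (x : Fq n) : ZMod 2 :=
  Algebra.trace (ZMod 2) (Fq n) x

/-- `(-1)^x` for `x : F_2`, as an integer. -/
def chi (x : ZMod 2) : ℤ := (-1 : ℤ) ^ x.val

/-- Walsh transform of a Boolean function on `F_{2^n} × F_2`. -/
noncomputable def walsh (n : ℕ) (f : Fq n × ZMod 2 → ZMod 2)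
    (lam : Fq n) (nu : ZMod 2) : ℤ :=
  ∑ x : Fq n × ZMod 2, chi (f x + tr1 n (lam * x.1) + nu * x.2)

/-- A Boolean function on `F_{2^{m-1}} × F_2` is bent if all its Walsh coefficients
are `± 2^(m/2)`. -/
def IsBent (m : ℕ) (f : Fq (m - 1) × ZMod 2 → ZMod 2) : Prop :=
  ∀ lam nu, walsh (m - 1) f lam nu = 2 ^ (m / 2) ∨ walsh (m - 1) f lam nu = -(2 ^ (m / 2))

/-- Cyclic bent function on `F_{2^{m-1}} × F_2`. -/
def IsCyclicBent (m : ℕ) (f : Fq (m - 1) × ZMod 2 → ZMod 2) : Prop :=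
  ∀ a b : Fq (m - 1), a ≠ b → ∀ ε : ZMod 2,
    IsBent m fun x => f (a * x.1, x.2) + f (b * x.1, x.2 + ε)

/-- The quadratic function `Q_j(x) = Tr^{m-1}_1 (Σ_{i=1}^{(f_j-1)/2} x^{2^{i e_j}+1})`,
where `f_j = (m-1)/e_j`. -/
noncomputable def Qfun (m e : ℕ) (x : Fq (m - 1)) : ZMod 2 :=
  tr1 (m - 1) (∑ i ∈ Finset.Icc 1 (((m - 1) / e - 1) / 2), x ^ (2 ^ (i * e) + 1))

/-- Relative trace `Tr^n_r(x) = Σ_{i=0}^{n/r - 1} x^{2^{r i}}` from `F_{2^n}` onto the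
subfield `F_{2^r}` (for `r ∣ n`), valued in `F_{2^n}`. -/
noncomputable def relTr (n r : ℕ) (x : Fq n) : Fq n :=
  ∑ i ∈ Finset.range (n / r), x ^ 2 ^ (r * i)

/-- Frobenius as an algebra equivalence over `ZMod 2`. -/
noncomputable def frobAlg (n : ℕ) : Fq n ≃ₐ[ZMod 2] Fq n :=
  AlgEquiv.ofRingEquiv (f := frobeniusEquiv (Fq n) 2) (fun c => by
    show frobenius (Fq n) 2 _ = _
    rw [frobenius_def, ← map_pow, ZMod.pow_card])

lemma tr1_sq (n : ℕ) (w : Fq n) : tr1 n (w ^ 2) = tr1 n w := by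
  have := Algebra.trace_eq_of_algEquiv (frobAlg n) w
  simpa [tr1, frobAlg, frobeniusEquiv_def, frobenius_def] using this

lemma tr1_pow2 (n k : ℕ) (w : Fq n) : tr1 n (w ^ 2 ^ k) = tr1 n w := by
  induction k with
  | zero => simp
  | succ k ih => rw [pow_succ, pow_mul, tr1_sq, ih]

lemma pow_card' (n : ℕ) (hn : n ≠ 0) (w : Fq n) : w ^ 2 ^ n = w := by
  have h := FiniteField.pow_card w
  rwa [← Nat.card_eq_fintype_card, GaloisField.card 2 n hn] at h

lemma tr1_add (n : ℕ) (x y : Fq n) : tr1 n (x + y) = tr1 n x + tr1 n y :=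
  map_add (Algebra.trace (ZMod 2) (Fq n)) x y

lemma tr1_sum {α : Type*} (n : ℕ) (t : Finset α) (g : α → Fq n) :
    tr1 n (∑ i ∈ t, g i) = ∑ i ∈ t, tr1 n (g i) :=
  map_sum (Algebra.trace (ZMod 2) (Fq n)) g t

lemma gamma_pow (n e : ℕ) (γ : Fq n) (hγ : γ ^ (2 ^ e) = γ) (i : ℕ) :
    γ ^ 2 ^ (e * i) = γ := by
  induction i with
  | zero => simp
  | succ i ih => rw [mul_add, mul_one, pow_add, pow_mul, ih, hγ]

lemma relTr_smul (n e : ℕ) (γ w : Fq n) (hγ : γ ^ (2 ^ e) = γ) :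
    relTr n e (γ * w) = γ * relTr n e w := by
  unfold relTr
  rw [Finset.mul_sum]
  refine Finset.sum_congr rfl fun i _ => ?_
  rw [mul_pow, gamma_pow n e γ hγ i]

/-- the polarization identity for `Q_j`. -/
theorem stmt3 (m e : ℕ) (hm : Even m) (hm0 : 0 < m)
    (he : 0 < e) (hdvd : e ∣ m - 1)
    (γ : Fq (m - 1)) (hγ : γ ^ (2 ^ e) = γ)  -- γ ∈ F_{2^e}
    (a x z : Fq (m - 1)) :
    Qfun m e (γ * a * (x + z)) + Qfun m e (γ * a * x) + Qfun m e (γ * a * z)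
      = tr1 (m - 1) (a * γ ^ 2 * (a * x + relTr (m - 1) e (a * x)) * z) := by
  have hm2 : 2 ≤ m := by obtain ⟨k, hk⟩ := hm; omega
  have hn0 : m - 1 ≠ 0 := by omega
  set f : ℕ := (m - 1) / e with hfdef
  set s : ℕ := (f - 1) / 2 with hsdef
  have hef : e * f = m - 1 := Nat.mul_div_cancel' hdvd
  have hoddn : Odd (m - 1) := Nat.Even.sub_odd hm0 hm odd_one
  have hoddf : Odd f := (Nat.odd_mul.mp (hef ▸ hoddn)).2
  have hf : f = 2 * s + 1 := by obtain ⟨k, hk⟩ := hoddf; omega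
  have h2 : (2 : Fq (m - 1)) = 0 := by
    have : CharP (Fq (m - 1)) 2 := inferInstance
    exact CharTwo.two_eq_zero
  set u : Fq (m - 1) := γ * a * x with hu
  set v : Fq (m - 1) := γ * a * z with hv
  have huv : γ * a * (x + z) = u + v := by rw [hu, hv]; ring
  -- Step A: polarization of the sum
  have stepA : Qfun m e (γ * a * (x + z)) + Qfun m e (γ * a * x) + Qfun m e (γ * a * z)
      = tr1 (m - 1) (∑ i ∈ Finset.Icc 1 s, (u ^ 2 ^ (i * e) * v + u * v ^ 2 ^ (i * e))) := by
    rw [huv]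
    unfold Qfun
    rw [← tr1_add, ← tr1_add]
    congr 1
    rw [← Finset.sum_add_distrib, ← Finset.sum_add_distrib]
    refine Finset.sum_congr rfl fun i _ => ?_
    rw [pow_succ, pow_succ, pow_succ, add_pow_char_pow]
    linear_combination (u ^ 2 ^ (i * e) * u + v ^ 2 ^ (i * e) * v) * h2
  rw [stepA, tr1_sum]
  -- split the sum
  have split : ∑ i ∈ Finset.Icc 1 s, tr1 (m - 1) (u ^ 2 ^ (i * e) * v + u * v ^ 2 ^ (i * e))
      = (∑ i ∈ Finset.Icc 1 s, tr1 (m - 1) (u ^ 2 ^ (i * e) * v))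
        + ∑ i ∈ Finset.Icc 1 s, tr1 (m - 1) (u * v ^ 2 ^ (i * e)) := by
    rw [← Finset.sum_add_distrib]
    exact Finset.sum_congr rfl fun i _ => tr1_add _ _ _
  rw [split]
  -- Step C: transfer the Frobenius power from v to u
  have stepC : ∑ i ∈ Finset.Icc 1 s, tr1 (m - 1) (u * v ^ 2 ^ (i * e))
      = ∑ i ∈ Finset.Icc 1 s, tr1 (m - 1) (u ^ 2 ^ ((f - i) * e) * v) := by
    refine Finset.sum_congr rfl fun i hi => ?_
    have hi' : 1 ≤ i ∧ i ≤ s := Finset.mem_Icc.mp hi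
    have hif : i ≤ f := by omega
    have hexp : (f - i) * e + i * e = m - 1 := by
      rw [← Nat.add_mul, Nat.sub_add_cancel hif, Nat.mul_comm]; exact hef
    have key : (u ^ 2 ^ ((f - i) * e) * v) ^ 2 ^ (i * e) = u * v ^ 2 ^ (i * e) := by
      rw [mul_pow, ← pow_mul, ← pow_add, hexp, pow_card' _ hn0]
    rw [← key, tr1_pow2]
  rw [stepC]
  -- Step D: reindex
  have stepD : ∑ i ∈ Finset.Icc 1 s, tr1 (m - 1) (u ^ 2 ^ ((f - i) * e) * v)
      = ∑ i ∈ Finset.Icc (s + 1) (f - 1), tr1 (m - 1) (u ^ 2 ^ (i * e) * v) := by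
    refine Finset.sum_nbij' (fun i => f - i) (fun i => f - i) ?_ ?_ ?_ ?_ ?_
    · intro i hi; simp only [Finset.mem_Icc] at *; omega
    · intro i hi; simp only [Finset.mem_Icc] at *; omega
    · intro i hi; simp only [Finset.mem_Icc] at hi; show f - (f - i) = i; omega
    · intro i hi; simp only [Finset.mem_Icc] at hi; show f - (f - i) = i; omega
    · intro i hi; rfl
  rw [stepD]
  -- Step E: join the two ranges
  have stepE : (∑ i ∈ Finset.Icc 1 s, tr1 (m - 1) (u ^ 2 ^ (i * e) * v))
      + ∑ i ∈ Finset.Icc (s + 1) (f - 1), tr1 (m - 1) (u ^ 2 ^ (i * e) * v)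
      = ∑ i ∈ Finset.Icc 1 (f - 1), tr1 (m - 1) (u ^ 2 ^ (i * e) * v) := by
    have e1 : Finset.Icc 1 s = Finset.Ioc 0 s := by rw [← Finset.Icc_add_one_left_eq_Ioc, zero_add]
    have e2 : Finset.Icc (s + 1) (f - 1) = Finset.Ioc s (f - 1) := by
      rw [← Finset.Icc_add_one_left_eq_Ioc]
    have e3 : Finset.Icc 1 (f - 1) = Finset.Ioc 0 (f - 1) := by rw [← Finset.Icc_add_one_left_eq_Ioc, zero_add]
    rw [e1, e2, e3]
    exact Finset.sum_Ioc_consecutive _ (by omega) (by omega)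
  rw [stepE, ← tr1_sum]
  -- Step F: relate to relTr
  have hrel : relTr (m - 1) e u = u + ∑ i ∈ Finset.Icc 1 (f - 1), u ^ 2 ^ (i * e) := by
    unfold relTr
    rw [← hfdef, Finset.range_eq_Ico, Finset.sum_eq_sum_Ico_succ_bot (by omega : 0 < f)]
    congr 1
    · simp
    · rw [show f = (f - 1) + 1 by omega, Finset.Ico_add_one_right_eq_Icc]
      exact Finset.sum_congr rfl fun i _ => by rw [Nat.mul_comm]
  have stepF : (∑ i ∈ Finset.Icc 1 (f - 1), u ^ 2 ^ (i * e)) = relTr (m - 1) e u + u := by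
    rw [hrel]; linear_combination (-u) * h2
  rw [← Finset.sum_mul, stepF]
  have hrelu : relTr (m - 1) e u = γ * relTr (m - 1) e (a * x) := by
    rw [hu, mul_assoc]; exact relTr_smul _ _ _ _ hγ
  rw [hrelu, hv, hu]
  congr 1
  ring
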